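/- For c₀ = 0, the functions x(t) = t + (1/π) arccot(2πt + k) and z(t) = z₀(1 + (2πt+k)²)/(1+k²) solve the system dx/dt = cos(2π(x−t)), dz/dt = 2πz sin(2π(x−t)), with x(0) = x₀ where k = cot(πx₀) and z(0) = z₀. -/

import Mathlib

open Real

noncomputable def arccot (y : ℝ) : ℝ := π / 2 - Real.arctan y

lemma arctan_cot {θ : ℝ} (h1 : 0 < θ) (h2 : θ < π) :
    Real.arctan (Real.cot θ) = π / 2 - θ := by
  have hcot : Real.cot θ = Real.tan (π / 2 - θ) := by
    rw [Real.tan_pi_div_two_sub, Real.cot_eq_cos_div_sin, Real.tan_eq_sin_div_cos, inv_div]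
  rw [hcot, Real.arctan_tan (by linarith) (by linarith)]

lemma my_cos_sq_arctan (u : ℝ) : Real.cos (Real.arctan u) ^ 2 = 1 / (1 + u ^ 2) := by
  have h : (0:ℝ) ≤ 1 + u ^ 2 := by positivity
  rw [Real.cos_arctan, div_pow, one_pow, Real.sq_sqrt h]

lemma my_sin_cos_arctan (u : ℝ) :
    Real.sin (Real.arctan u) * Real.cos (Real.arctan u) = u / (1 + u ^ 2) := by
  have h : (0:ℝ) ≤ 1 + u ^ 2 := by positivity
  rw [Real.sin_arctan, Real.cos_arctan, div_mul_div_comm, mul_one,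
    Real.mul_self_sqrt h]

theorem trajectory_solves_system_c0_zero
    (x₀ z₀ : ℝ) (hx₀ : x₀ ∈ Set.Ioo (0 : ℝ) 1) (hz₀ : 0 < z₀)
    (k : ℝ) (hk : k = Real.cot (π * x₀))
    (x z : ℝ → ℝ)
    (hx : ∀ t, x t = t + (1 / π) * arccot (2 * π * t + k))
    (hz : ∀ t, z t = z₀ * (1 + (2 * π * t + k) ^ 2) / (1 + k ^ 2)) :
    x 0 = x₀ ∧ z 0 = z₀ ∧
    ∀ t : ℝ,
      HasDerivAt x (Real.cos (2 * π * (x t - t))) t ∧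
      HasDerivAt z (2 * π * z t * Real.sin (2 * π * (x t - t))) t := by
  obtain ⟨h0, h1⟩ := hx₀
  have hπ : (0:ℝ) < π := Real.pi_pos
  have hπx : 0 < π * x₀ := by positivity
  have hπx' : π * x₀ < π := by nlinarith
  have hkk : (0:ℝ) < 1 + k ^ 2 := by positivity
  refine ⟨?_, ?_, ?_⟩
  · rw [hx 0]
    unfold arccot
    simp only [mul_zero, zero_add]
    rw [hk, show π / 2 - Real.arctan ((π * x₀).cot) = π * x₀ by rw [arctan_cot hπx hπx']; ring]
    field_simp
  · rw [hz 0]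
    field_simp
    simp
  · intro t
    set u : ℝ := 2 * π * t + k with hu
    have hu2 : (0:ℝ) < 1 + u ^ 2 := by positivity
    -- inner derivative
    have hinner : HasDerivAt (fun t : ℝ => 2 * π * t + k) (2 * π) t := by
      simpa using ((hasDerivAt_id t).const_mul (2 * π)).add_const k
    have harctan : HasDerivAt (fun t : ℝ => Real.arctan (2 * π * t + k))
        (1 / (1 + u ^ 2) * (2 * π)) t :=
      (Real.hasDerivAt_arctan u).comp (h := fun t : ℝ => 2 * π * t + k) t hinner
    -- angle simplification
    have hangle : 2 * π * (x t - t) = π - 2 * Real.arctan u := by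
      rw [hx t]
      unfold arccot
      field_simp
      ring
    have hcos : Real.cos (2 * π * (x t - t)) = 1 - 2 / (1 + u ^ 2) := by
      rw [hangle, Real.cos_pi_sub, Real.cos_two_mul, my_cos_sq_arctan]
      ring
    have hsin : Real.sin (2 * π * (x t - t)) = 2 * u / (1 + u ^ 2) := by
      rw [hangle, Real.sin_pi_sub, Real.sin_two_mul, mul_assoc, my_sin_cos_arctan]
      ring
    constructor
    · have hxd : HasDerivAt x (1 - 1 / π * (1 / (1 + u ^ 2) * (2 * π))) t := by
        have : HasDerivAt (fun t : ℝ => t + 1 / π * arccot (2 * π * t + k))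
            (1 - 1 / π * (1 / (1 + u ^ 2) * (2 * π))) t := by
          have harc : HasDerivAt (fun t : ℝ => 1 / π * arccot (2 * π * t + k))
              (-(1 / π * (1 / (1 + u ^ 2) * (2 * π)))) t := by
            unfold arccot
            simpa [mul_sub, mul_comm, mul_left_comm] using
              ((harctan.const_mul (1 / π)).const_sub (1 / π * (π / 2)))
          simpa [sub_eq_add_neg] using (hasDerivAt_id' t).fun_add harc
        exact this.congr_of_eventuallyEq (Filter.Eventually.of_forall fun s => hx s)
      have heq : 1 - 1 / π * (1 / (1 + u ^ 2) * (2 * π)) = Real.cos (2 * π * (x t - t)) := by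
        rw [hcos]; field_simp
      exact heq ▸ hxd
    · have hzd : HasDerivAt z (z₀ * (2 * u * (2 * π)) / (1 + k ^ 2)) t := by
        have : HasDerivAt (fun t : ℝ => z₀ * (1 + (2 * π * t + k) ^ 2) / (1 + k ^ 2))
            (z₀ * (2 * u * (2 * π)) / (1 + k ^ 2)) t := by
          have hsq : HasDerivAt (fun t : ℝ => (2 * π * t + k) ^ 2) (2 * u * (2 * π)) t := by
            have := hinner.fun_pow 2
            norm_num at this
            simpa [hu, mul_comm, mul_left_comm, mul_assoc] using this
          have := ((hsq.const_add 1).const_mul z₀).div_const (1 + k ^ 2)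
          simpa [mul_comm, mul_left_comm, mul_assoc] using this
        exact this.congr_of_eventuallyEq (Filter.Eventually.of_forall fun s => hz s)
      have heq : z₀ * (2 * u * (2 * π)) / (1 + k ^ 2)
          = 2 * π * z t * Real.sin (2 * π * (x t - t)) := by
        rw [hsin, hz t]
        field_simp
        ring
      exact heq ▸ hzd
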